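/- For all integers k and ℓ with 3 ≤ ℓ ≤ k there exists a countable k-uniform hypergraph H=(V,E) that has property C_{ℓ−1} but does not have property C_ℓ. -/
import Mathlib


/-- Property `C_ℓ` of a `k`-uniform hypergraph with edge set `E`: there is a nonempty set of
vertices `V'` such that every `v ∈ V'` lies in infinitely many edges `e` with `|V' ∩ e| ≥ ℓ`. -/
def PropC {V : Type*} (E : Set (Finset V)) (ℓ : ℕ) : Prop :=
  ∃ V' : Set V, V'.Nonempty ∧
    ∀ v ∈ V', {e | e ∈ E ∧ v ∈ e ∧ ℓ ≤ ((e : Set V) ∩ V').ncard}.Infinite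

/-- The `i`-th edge of the infinite loose path with vertex sequence `w` (0-indexed):
`{w ((k-1)i), w ((k-1)i + 1), …, w ((k-1)i + k - 1)}`. -/
def looseEdge {V : Type*} [DecidableEq V] (k : ℕ) (w : ℕ → V) (i : ℕ) : Finset V :=
  (Finset.range k).image fun j => w ((k - 1) * i + j)

/-- The edge of an infinite `(k-1)`-branching tree `x` at the node indexed by
the finite sequence `s`: `{x s} ∪ {x (a :: s) | a ∈ Fin (k-1)}`. -/
def treeEdge {V : Type*} [DecidableEq V] (k : ℕ) (x : List (Fin (k - 1)) → V)
    (s : List (Fin (k - 1))) : Finset V :=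
  insert (x s) (Finset.univ.image fun a : Fin (k - 1) => x (a :: s))

theorem stmt6 (k ℓ : ℕ) (hℓ : 3 ≤ ℓ) (hℓk : ℓ ≤ k) :
    ∃ E : Set (Finset ℕ), (∀ e ∈ E, e.card = k) ∧ PropC E (ℓ - 1) ∧ ¬ PropC E ℓ := by
  set m := ℓ - 1 with hm
  set b := k - m with hb
  have hm2 : 2 ≤ m := by omega
  have hb1 : 1 ≤ b := by omega
  set e : ℕ → Finset ℕ := fun i => Finset.range m ∪ Finset.Ico (m + b*i) (m + b*i + b)
    with he
  have hmem : ∀ i v, v ∈ e i ↔ v < m ∨ (m + b*i ≤ v ∧ v < m + b*i + b) := by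
    intro i v
    simp [he, Finset.mem_union, Finset.mem_range, Finset.mem_Ico]
  have einj : Function.Injective e := by
    intro i j hij
    have h1 : m + b*i ∈ e i := (hmem i _).2 (Or.inr ⟨le_refl _, by omega⟩)
    rw [hij] at h1
    rcases (hmem j _).1 h1 with h | h
    · omega
    · have h2 : b * j ≤ b * i := by omega
      have h3 : b * i < b * (j + 1) := by
        have : b * (j + 1) = b * j + b := by ring
        omega
      have h4 : j ≤ i := Nat.le_of_mul_le_mul_left h2 (by omega)
      have h5 : i < j + 1 := Nat.lt_of_mul_lt_mul_left h3
      omega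
  have hcoreEq : ∀ i, ((e i : Set ℕ) ∩ {n | n < m}) = {n | n < m} := by
    intro i
    ext x
    simp only [Set.mem_inter_iff, Set.mem_setOf_eq, Finset.mem_coe, hmem]
    constructor
    · exact fun h => h.2
    · exact fun h => ⟨Or.inl h, h⟩
  have hcoreFin : ({n : ℕ | n < m}).Finite := Set.finite_Iio m
  have hcoreCard : ({n : ℕ | n < m}).ncard = m := by
    have : {n : ℕ | n < m} = ↑(Finset.range m) := by ext x; simp
    rw [this, Set.ncard_coe_finset, Finset.card_range]
  refine ⟨Set.range e, ?_, ?_, ?_⟩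
  · rintro _ ⟨i, rfl⟩
    rw [he]
    simp only
    rw [Finset.card_union_of_disjoint, Finset.card_range, Nat.card_Ico]
    · omega
    · rw [Finset.disjoint_left]
      intro a ha hb'
      simp only [Finset.mem_range] at ha
      simp only [Finset.mem_Ico] at hb'
      omega
  · refine ⟨{n | n < m}, ⟨0, by simp; omega⟩, ?_⟩
    intro v hv
    have hsub : Set.range e ⊆
        {e' | e' ∈ Set.range e ∧ v ∈ e' ∧ m ≤ ((e' : Set ℕ) ∩ {n | n < m}).ncard} := by
      rintro _ ⟨i, rfl⟩
      refine ⟨⟨i, rfl⟩, (hmem i v).2 (Or.inl hv), ?_⟩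
      rw [hcoreEq i, hcoreCard]
    exact (Set.infinite_range_of_injective einj).mono hsub
  · rintro ⟨V', ⟨v0, hv0⟩, hV⟩
    have hVsub : V' ⊆ {n | n < m} := by
      intro v hv
      by_contra hvm
      simp only [Set.mem_setOf_eq, not_lt] at hvm
      have hsing : {e' | e' ∈ Set.range e ∧ v ∈ e' ∧ ℓ ≤ ((e' : Set ℕ) ∩ V').ncard}.Subsingleton := by
        rintro _ ⟨⟨i, rfl⟩, hvi, -⟩ _ ⟨⟨j, rfl⟩, hvj, -⟩
        rcases (hmem i v).1 hvi with h | hi'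
        · omega
        rcases (hmem j v).1 hvj with h | hj'
        · omega
        have h3 : b * i < b * (j + 1) := by
          have : b * (j + 1) = b * j + b := by ring
          omega
        have h4 : b * j < b * (i + 1) := by
          have : b * (i + 1) = b * i + b := by ring
          omega
        have h5 : i < j + 1 := Nat.lt_of_mul_lt_mul_left h3
        have h6 : j < i + 1 := Nat.lt_of_mul_lt_mul_left h4
        have : i = j := by omega
        rw [this]
      exact hV v hv hsing.finite
    obtain ⟨e', ⟨-, -, hcard⟩⟩ := (hV v0 hv0).nonempty
    have hle : ((e' : Set ℕ) ∩ V').ncard ≤ ({n : ℕ | n < m}).ncard :=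
      Set.ncard_le_ncard (fun x hx => hVsub hx.2) hcoreFin
    rw [hcoreCard] at hle
    omega
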